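/- Let H be a set of functions X × Y → ℝ, let c : X × Y → {0,1} be a requirement, M > 0 a constant with M > |h(x,y)| for all h ∈ H and (x,y), and define h_c(x,y) = h(x,y) if c(x,y)=1 and h_c(x,y) = −M otherwise. Then for any sample S = ((x_1,y_1),...,(x_m,y_m)), the empirical Rademacher complexity of H_c = {h_c : h ∈ H} satisfies R_S(H_c) ≤ R_S(H). -/

import Mathlib

open Finset

/-- Empirical Rademacher complexity of a family `F` of real-valued functions on `Z`
with respect to the sample `S = (z_1, ..., z_m)`. -/
noncomputable def empRad {Z : Type*} {m : ℕ} (S : Fin m → Z) (F : Set (Z → ℝ)) : ℝ :=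
  (∑ σ : Fin m → Bool,
      sSup ((fun f => ∑ i, (if σ i then (1 : ℝ) else -1) * f (S i)) '' F)) / (2 ^ m * m)

section Aux

variable {Z : Type*} {m : ℕ}

/-- Partial signed sum over a subset of coordinates. -/
noncomputable def gS (S : Fin m → Z) (T : Finset (Fin m)) (σ : Fin m → Bool) (f : Z → ℝ) : ℝ :=
  ∑ i ∈ T, (if σ i then (1 : ℝ) else -1) * f (S i)

/-- Sum of per-sign suprema over a subset of coordinates. -/
noncomputable def FF (S : Fin m → Z) (H : Set (Z → ℝ)) (T : Finset (Fin m)) : ℝ :=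
  ∑ σ : Fin m → Bool, sSup (gS S T σ '' H)

/-- Flip a sign vector at coordinate `j`. -/
def flipσ (j : Fin m) (σ : Fin m → Bool) : Fin m → Bool :=
  Function.update σ j (!σ j)

lemma flipσ_invol (j : Fin m) : Function.Involutive (flipσ j) := by
  intro σ
  funext i
  by_cases h : i = j
  · subst h; simp [flipσ]
  · simp [flipσ, Function.update_of_ne h]

/-- The flip as a permutation. -/
def flipPerm (j : Fin m) : Equiv.Perm (Fin m → Bool) :=
  ⟨flipσ j, flipσ j, flipσ_invol j, flipσ_invol j⟩

lemma flipσ_apply_self (j : Fin m) (σ : Fin m → Bool) : flipσ j σ j = !σ j := by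
  simp [flipσ]

lemma flipσ_apply_ne (j : Fin m) (σ : Fin m → Bool) {i : Fin m} (h : i ≠ j) :
    flipσ j σ i = σ i := by
  simp [flipσ, Function.update_of_ne h]

lemma sum_sign (i : Fin m) : ∑ σ : Fin m → Bool, (if σ i then (1 : ℝ) else -1) = 0 := by
  have h := Equiv.sum_comp (flipPerm i) (fun σ : Fin m → Bool => (if σ i then (1 : ℝ) else -1))
  have h2 : ∀ σ : Fin m → Bool,
      (if (flipPerm i) σ i then (1 : ℝ) else -1) = -(if σ i then (1 : ℝ) else -1) := by
    intro σ
    have : (flipPerm i) σ i = !σ i := flipσ_apply_self i σ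
    rw [this]; cases σ i <;> simp
  rw [Finset.sum_congr rfl (fun σ _ => h2 σ), Finset.sum_neg_distrib] at h
  linarith

lemma bddT (S : Fin m → Z) (H : Set (Z → ℝ))
    (hbdd : ∀ σ : Fin m → Bool,
      BddAbove ((fun f => ∑ i, (if σ i then (1 : ℝ) else -1) * f (S i)) '' H))
    (T : Finset (Fin m)) (σ : Fin m → Bool) : BddAbove (gS S T σ '' H) := by
  classical
  set τ : Fin m → Bool := fun i => if i ∈ T then σ i else true with hτ
  set τ' : Fin m → Bool := fun i => if i ∈ T then σ i else false with hτ'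
  obtain ⟨b1, hb1⟩ := hbdd τ
  obtain ⟨b2, hb2⟩ := hbdd τ'
  refine ⟨(b1 + b2) / 2, ?_⟩
  rintro x ⟨h, hh, rfl⟩
  have e1 : ∑ i ∈ T, (if τ i then (1 : ℝ) else -1) * h (S i) = gS S T σ h :=
    Finset.sum_congr rfl (fun i hi => by simp [hτ, hi])
  have e2 : ∑ i ∈ T, (if τ' i then (1 : ℝ) else -1) * h (S i) = gS S T σ h :=
    Finset.sum_congr rfl (fun i hi => by simp [hτ', hi])
  have e3 : ∑ i ∈ Tᶜ, (if τ i then (1 : ℝ) else -1) * h (S i)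
      + ∑ i ∈ Tᶜ, (if τ' i then (1 : ℝ) else -1) * h (S i) = 0 := by
    rw [← Finset.sum_add_distrib]
    apply Finset.sum_eq_zero
    intro i hi
    have hiT : i ∉ T := Finset.mem_compl.mp hi
    simp [hτ, hτ', hiT]
  have hs1 : (∑ i, (if τ i then (1 : ℝ) else -1) * h (S i)) ≤ b1 := hb1 ⟨h, hh, rfl⟩
  have hs2 : (∑ i, (if τ' i then (1 : ℝ) else -1) * h (S i)) ≤ b2 := hb2 ⟨h, hh, rfl⟩
  have sp1 : (∑ i, (if τ i then (1 : ℝ) else -1) * h (S i))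
      = ∑ i ∈ T, (if τ i then (1 : ℝ) else -1) * h (S i)
        + ∑ i ∈ Tᶜ, (if τ i then (1 : ℝ) else -1) * h (S i) :=
    (Finset.sum_add_sum_compl T _).symm
  have sp2 : (∑ i, (if τ' i then (1 : ℝ) else -1) * h (S i))
      = ∑ i ∈ T, (if τ' i then (1 : ℝ) else -1) * h (S i)
        + ∑ i ∈ Tᶜ, (if τ' i then (1 : ℝ) else -1) * h (S i) :=
    (Finset.sum_add_sum_compl T _).symm
  rw [sp1, e1] at hs1
  rw [sp2, e2] at hs2
  linarith

lemma FF_le_insert (S : Fin m → Z) (H : Set (Z → ℝ)) (hne : H.Nonempty)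
    (hbdd : ∀ σ : Fin m → Bool,
      BddAbove ((fun f => ∑ i, (if σ i then (1 : ℝ) else -1) * f (S i)) '' H))
    (T : Finset (Fin m)) (j : Fin m) : FF S H T ≤ FF S H (insert j T) := by
  by_cases hj : j ∈ T
  · rw [Finset.insert_eq_self.mpr hj]
  · have key : ∀ σ : Fin m → Bool, 2 * sSup (gS S T σ '' H)
        ≤ sSup (gS S (insert j T) σ '' H) + sSup (gS S (insert j T) (flipσ j σ) '' H) := by
      intro σ
      have h2 : sSup (gS S T σ '' H)
          ≤ (sSup (gS S (insert j T) σ '' H) + sSup (gS S (insert j T) (flipσ j σ) '' H)) / 2 := by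
        apply csSup_le (hne.image _)
        rintro x ⟨h, hh, rfl⟩
        have hA : gS S (insert j T) σ h ≤ sSup (gS S (insert j T) σ '' H) :=
          le_csSup (bddT S H hbdd _ _) ⟨h, hh, rfl⟩
        have hB : gS S (insert j T) (flipσ j σ) h ≤ sSup (gS S (insert j T) (flipσ j σ) '' H) :=
          le_csSup (bddT S H hbdd _ _) ⟨h, hh, rfl⟩
        have hsum : gS S (insert j T) σ h + gS S (insert j T) (flipσ j σ) h
            = 2 * gS S T σ h := by
          rw [gS, gS, Finset.sum_insert hj, Finset.sum_insert hj]
          have hflipT : ∑ i ∈ T, (if flipσ j σ i then (1 : ℝ) else -1) * h (S i)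
              = ∑ i ∈ T, (if σ i then (1 : ℝ) else -1) * h (S i) :=
            Finset.sum_congr rfl fun i hi => by
              rw [flipσ_apply_ne j σ (ne_of_mem_of_not_mem hi hj)]
          rw [hflipT, flipσ_apply_self]
          show _ = 2 * ∑ i ∈ T, (if σ i then (1 : ℝ) else -1) * h (S i)
          cases σ j <;> simp <;> ring
        linarith
      linarith
    have reidx : ∑ σ : Fin m → Bool, sSup (gS S (insert j T) (flipσ j σ) '' H)
        = FF S H (insert j T) :=
      Equiv.sum_comp (flipPerm j) (fun σ => sSup (gS S (insert j T) σ '' H))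
    have h3 : 2 * FF S H T ≤ 2 * FF S H (insert j T) := by
      calc 2 * FF S H T = ∑ σ : Fin m → Bool, 2 * sSup (gS S T σ '' H) := by
            rw [FF, Finset.mul_sum]
        _ ≤ ∑ σ : Fin m → Bool, (sSup (gS S (insert j T) σ '' H)
              + sSup (gS S (insert j T) (flipσ j σ) '' H)) :=
            Finset.sum_le_sum fun σ _ => key σ
        _ = FF S H (insert j T) + ∑ σ : Fin m → Bool,
              sSup (gS S (insert j T) (flipσ j σ) '' H) := by
            rw [Finset.sum_add_distrib]; rfl
        _ = 2 * FF S H (insert j T) := by rw [reidx]; ring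
    linarith

lemma FF_le_univ (S : Fin m → Z) (H : Set (Z → ℝ)) (hne : H.Nonempty)
    (hbdd : ∀ σ : Fin m → Bool,
      BddAbove ((fun f => ∑ i, (if σ i then (1 : ℝ) else -1) * f (S i)) '' H))
    (T : Finset (Fin m)) : FF S H T ≤ FF S H univ := by
  classical
  have main : ∀ U : Finset (Fin m), FF S H T ≤ FF S H (T ∪ U) := by
    intro U
    induction U using Finset.induction_on with
    | empty => simp
    | insert _ _ ha ih =>
      rename_i a U'
      rw [Finset.union_insert]
      exact le_trans ih (FF_le_insert S H hne hbdd _ _)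
  have h1 := main univ
  have h2 : T ∪ univ = univ := Finset.eq_univ_of_forall (fun i => Finset.mem_union_right T (Finset.mem_univ i))
  rwa [h2] at h1

lemma sSup_image_add_const {s : Set ℝ} (hne : s.Nonempty) (hbd : BddAbove s) (a : ℝ) :
    sSup ((fun x => x + a) '' s) = sSup s + a := by
  have hbd' : BddAbove ((fun x => x + a) '' s) := by
    obtain ⟨b, hb⟩ := hbd
    refine ⟨b + a, ?_⟩
    rintro x ⟨y, hy, rfl⟩
    exact by dsimp only; linarith [hb hy]
  refine le_antisymm ?_ ?_
  · apply csSup_le (hne.image _)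
    rintro x ⟨y, hy, rfl⟩
    exact by dsimp only; linarith [le_csSup hbd hy]
  · have h1 : sSup s ≤ sSup ((fun x => x + a) '' s) - a := by
      apply csSup_le hne
      intro y hy
      have : y + a ≤ sSup ((fun x => x + a) '' s) := le_csSup hbd' ⟨y, hy, rfl⟩
      linarith
    linarith

end Aux

/-- The empirical Rademacher complexity of the verifier-modified class
`H_c = { (x,y) ↦ if c(x,y) then h(x,y) else -M : h ∈ H }` is at most that of `H`. -/
theorem rad_modified_le {X Y : Type*} {m : ℕ} (S : Fin m → X × Y)
    (H : Set (X × Y → ℝ)) (hHne : H.Nonempty)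
    (c : X → Y → Bool) (M : ℝ) (hM : 0 < M)
    (hbound : ∀ h ∈ H, ∀ p : X × Y, |h p| < M)
    (hbdd : ∀ σ : Fin m → Bool,
      BddAbove ((fun f => ∑ i, (if σ i then (1 : ℝ) else -1) * f (S i)) '' H)) :
    empRad S {g | ∃ h ∈ H, g = fun p : X × Y => if c p.1 p.2 then h p else -M}
      ≤ empRad S H := by
  classical
  set Hc : Set (X × Y → ℝ) :=
    {g | ∃ h ∈ H, g = fun p : X × Y => if c p.1 p.2 then h p else -M} with hHc
  set C : Finset (Fin m) := univ.filter (fun i => c (S i).1 (S i).2) with hCdef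
  set K : (Fin m → Bool) → ℝ :=
    fun σ => ∑ i ∈ Cᶜ, (if σ i then (1 : ℝ) else -1) * (-M) with hKdef
  -- per-function sum identity
  have hsum : ∀ (σ : Fin m → Bool) (h : X × Y → ℝ),
      (∑ i, (if σ i then (1 : ℝ) else -1) * (if c (S i).1 (S i).2 then h (S i) else -M))
        = gS S C σ h + K σ := by
    intro σ h
    rw [← Finset.sum_add_sum_compl C
      (fun i => (if σ i then (1 : ℝ) else -1) * (if c (S i).1 (S i).2 then h (S i) else -M))]
    congr 1
    · apply Finset.sum_congr rfl
      intro i hi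
      have : c (S i).1 (S i).2 = true := by simpa [hCdef] using hi
      simp [this]
    · apply Finset.sum_congr rfl
      intro i hi
      have hiC : i ∉ C := Finset.mem_compl.mp hi
      have : c (S i).1 (S i).2 = false := by
        by_contra hcon
        simp only [Bool.not_eq_false] at hcon
        exact hiC (by simp [hCdef, hcon])
      simp [this]
  -- per-sign image identity
  have himg : ∀ σ : Fin m → Bool,
      ((fun f => ∑ i, (if σ i then (1 : ℝ) else -1) * f (S i)) '' Hc)
        = (fun x => x + K σ) '' (gS S C σ '' H) := by
    intro σ
    ext x
    constructor
    · rintro ⟨g, ⟨h, hh, rfl⟩, rfl⟩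
      exact ⟨gS S C σ h, ⟨h, hh, rfl⟩, (hsum σ h).symm⟩
    · rintro ⟨x', ⟨h, hh, rfl⟩, rfl⟩
      exact ⟨(fun p => if c p.1 p.2 then h p else -M), ⟨h, hh, rfl⟩, hsum σ h⟩
  have hsSup : ∀ σ : Fin m → Bool,
      sSup ((fun f => ∑ i, (if σ i then (1 : ℝ) else -1) * f (S i)) '' Hc)
        = sSup (gS S C σ '' H) + K σ := by
    intro σ
    rw [himg σ, sSup_image_add_const (hHne.image _) (bddT S H hbdd C σ)]
  have hKzero : ∑ σ : Fin m → Bool, K σ = 0 := by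
    simp only [hKdef]
    rw [Finset.sum_comm]
    apply Finset.sum_eq_zero
    intro i _
    rw [← Finset.sum_mul, sum_sign]
    ring
  have hnum : (∑ σ : Fin m → Bool,
      sSup ((fun f => ∑ i, (if σ i then (1 : ℝ) else -1) * f (S i)) '' Hc))
        ≤ ∑ σ : Fin m → Bool,
          sSup ((fun f => ∑ i, (if σ i then (1 : ℝ) else -1) * f (S i)) '' H) := by
    have e1 : (∑ σ : Fin m → Bool,
        sSup ((fun f => ∑ i, (if σ i then (1 : ℝ) else -1) * f (S i)) '' Hc))
          = FF S H C := by
      rw [Finset.sum_congr rfl (fun σ _ => hsSup σ), Finset.sum_add_distrib, hKzero,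
        add_zero, FF]
    have e2 : (∑ σ : Fin m → Bool,
        sSup ((fun f => ∑ i, (if σ i then (1 : ℝ) else -1) * f (S i)) '' H))
          = FF S H univ := by
      apply Finset.sum_congr rfl
      intro σ _
      rfl
    rw [e1, e2]
    exact FF_le_univ S H hHne hbdd C
  rw [empRad, empRad, div_eq_mul_inv, div_eq_mul_inv]
  exact mul_le_mul_of_nonneg_right hnum (by positivity)
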